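/- If p is a quadratic real polynomial p(t) = at² + bt + c with no real roots (b² - 4ac < 0, a > 0) and complex roots ω, ω̄, then ∫₀¹ t^h / p(t) dt equals Res(w^h(log(1-1/w) + ∑_{k=1}^h 1/(kw^k))/p(w), ω) + Res(..., ω̄), and this sum is real. -/

import Mathlib

open Real Finset intervalIntegral
open Metric

/-- The residue of `f` at `ω`, as the limit of circle integrals of shrinking radius. -/
noncomputable def residue (f : ℂ → ℂ) (ω : ℂ) : ℂ :=
  Filter.limUnder (nhdsWithin 0 (Set.Ioi (0 : ℝ)))
    (fun r : ℝ => (2 * Real.pi * Complex.I)⁻¹ * ∮ z in C(ω, r), f z)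


lemma residue_simple {f F : ℂ → ℂ} {ω : ℂ} {R : ℝ} (hR : 0 < R)
    (hF : DifferentiableOn ℂ F (closedBall ω R))
    (hf : ∀ z, z ≠ ω → f z = (z - ω)⁻¹ * F z) :
    residue f ω = F ω := by
  have key : ∀ r ∈ Set.Ioc (0:ℝ) R,
      (2 * Real.pi * Complex.I)⁻¹ * (∮ z in C(ω, r), f z) = F ω := by
    intro r hr
    have h1 : (∮ z in C(ω, r), f z) = ∮ z in C(ω, r), (z - ω)⁻¹ • F z := by
      refine circleIntegral.integral_congr hr.1.le fun z hz => ?_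
      have : z ≠ ω := by
        intro hzz
        simp [hzz, Metric.mem_sphere] at hz
        exact hr.1.ne' hz.symm
      simpa [smul_eq_mul] using hf z this
    have h2 : (∮ z in C(ω, r), (z - ω)⁻¹ • F z) = (2 * Real.pi * Complex.I : ℂ) • F ω :=
      (hF.mono (closedBall_subset_closedBall hr.2)).circleIntegral_sub_inv_smul
        (mem_ball_self hr.1)
    rw [h1, h2, smul_eq_mul]
    rw [inv_mul_cancel_left₀ (by simp [Real.pi_ne_zero, Complex.I_ne_zero, Complex.ofReal_ne_zero])]
  have hev : (fun r : ℝ => (2 * Real.pi * Complex.I)⁻¹ * ∮ z in C(ω, r), f z)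
      =ᶠ[nhdsWithin 0 (Set.Ioi (0:ℝ))] fun _ => F ω := by
    filter_upwards [Ioc_mem_nhdsGT hR] with r hr using key r hr
  exact (Filter.Tendsto.congr' hev.symm tendsto_const_nhds).limUnder_eq

lemma sub_ofReal_ne {ω : ℂ} (hω : ω.im ≠ 0) (t : ℝ) : (t:ℂ) - ω ≠ 0 := by
  intro hc
  apply hω
  have := congrArg Complex.im hc
  simpa using this.symm

lemma cont_pow_div {ω : ℂ} (hω : ω.im ≠ 0) (h : ℕ) :
    Continuous fun t : ℝ => (t:ℂ)^h / ((t:ℂ) - ω) := by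
  apply Continuous.div (by continuity) (by continuity)
  exact fun t => sub_ofReal_ne hω t

lemma integral_pow_div_sub {ω : ℂ} (hω : ω.im ≠ 0) (h : ℕ) :
    ∫ t in (0:ℝ)..1, (t:ℂ)^h / ((t:ℂ) - ω) =
      ω^h * Complex.log (1 - 1/ω) + ∑ k ∈ Icc 1 h, ω^(h-k)/(k:ℂ) := by
  have hω0 : ω ≠ 0 := fun hc => hω (by simp [hc])
  induction h with
  | zero =>
    simp only [pow_zero]
    have hderiv : ∀ t ∈ Set.uIcc (0:ℝ) 1,
        HasDerivAt (fun s : ℝ => Complex.log (1 - (s:ℂ)/ω)) (1 / ((t:ℂ) - ω)) t := by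
      intro t ht
      have hne : (t:ℂ) - ω ≠ 0 := sub_ofReal_ne hω t
      have hne' : (1 - (t:ℂ)/ω) ≠ 0 := by
        intro hc
        apply hne
        have : (1 - (t:ℂ)/ω) * ω = 0 := by rw [hc]; ring
        rw [sub_mul, div_mul_cancel₀ _ hω0, one_mul] at this
        linear_combination -this
      have hmem : (1 - (t:ℂ)/ω) ∈ Complex.slitPlane := by
        rw [Set.uIcc_of_le zero_le_one] at ht
        rcases eq_or_lt_of_le ht.1 with h0 | h0
        · simp [← h0]
        · right
          have him : ((t:ℂ)/ω).im = -(t * ω.im) / Complex.normSq ω := by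
            rw [Complex.div_im]
            simp
            ring
          have : (1 - (t:ℂ)/ω).im = (t * ω.im) / Complex.normSq ω := by
            simp [him]
            ring
          rw [this]
          exact div_ne_zero (mul_ne_zero h0.ne' hω) (Complex.normSq_pos.mpr hω0).ne'
      have hu : HasDerivAt (fun z : ℂ => 1 - z/ω) (-ω⁻¹) (t:ℂ) := by
        simpa using ((hasDerivAt_id ((t:ℂ))).div_const ω).const_sub 1
      have hlog := ((Complex.hasDerivAt_log hmem).comp ((t:ℂ)) hu).comp_ofReal
      have hmul : (1 - (t:ℂ)/ω) * ω = ω - t := by field_simp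
      have heq : (1 - (t:ℂ)/ω)⁻¹ * -ω⁻¹ = 1/((t:ℂ)-ω) := by
        rw [mul_neg, ← mul_inv, hmul, ← inv_neg, neg_sub, one_div]
      convert hlog using 1
      exacts [rfl, heq.symm]
    rw [show (∫ t in (0:ℝ)..1, (1:ℂ) / ((t:ℂ) - ω)) =
        Complex.log (1 - (1:ℂ)/ω) - Complex.log (1 - (0:ℂ)/ω) from
      intervalIntegral.integral_eq_sub_of_hasDerivAt hderiv
        (by simpa using (cont_pow_div hω 0).intervalIntegrable 0 1)]
    simp
  | succ h ih =>
    have hsplit : ∀ t : ℝ, (t:ℂ)^(h+1) / ((t:ℂ) - ω)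
        = (t:ℂ)^h + ω * ((t:ℂ)^h / ((t:ℂ) - ω)) := by
      intro t
      have hne : (t:ℂ) - ω ≠ 0 := sub_ofReal_ne hω t
      field_simp
      ring
    have hint1 : IntervalIntegrable (fun t : ℝ => ((t:ℂ)^h : ℂ)) MeasureTheory.volume 0 1 :=
      (by continuity : Continuous fun t : ℝ => ((t:ℂ)^h)).intervalIntegrable 0 1
    have hint2 : IntervalIntegrable (fun t : ℝ => ω * ((t:ℂ)^h / ((t:ℂ) - ω)))
        MeasureTheory.volume 0 1 :=
      (continuous_const.mul (cont_pow_div hω h)).intervalIntegrable 0 1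
    rw [intervalIntegral.integral_congr (g := fun t : ℝ =>
        (t:ℂ)^h + ω * ((t:ℂ)^h / ((t:ℂ) - ω))) (fun t _ => hsplit t),
      intervalIntegral.integral_add hint1 hint2, intervalIntegral.integral_const_mul, ih]
    have hpow : (∫ t in (0:ℝ)..1, ((t:ℂ)^h)) = 1/((h:ℂ)+1) := by
      have : (∫ t in (0:ℝ)..1, ((t:ℂ)^h)) = ((∫ t in (0:ℝ)..1, (t^h : ℝ) : ℝ) : ℂ) := by
        rw [← intervalIntegral.integral_ofReal]
        norm_num
      rw [this, integral_pow]
      push_cast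
      simp
    rw [hpow, Finset.sum_Icc_succ_top (by omega : 1 ≤ h + 1)]
    have hs : ω * ∑ k ∈ Icc 1 h, ω^(h-k)/(k:ℂ) = ∑ k ∈ Icc 1 h, ω^(h+1-k)/(k:ℂ) := by
      rw [Finset.mul_sum]
      refine Finset.sum_congr rfl fun k hk => ?_
      rw [Finset.mem_Icc] at hk
      rw [show h + 1 - k = (h - k) + 1 from by omega, pow_succ]
      ring
    rw [mul_add, hs]
    simp [pow_succ]
    ring

lemma one_sub_inv_im (z : ℂ) : (1 - 1/z).im = z.im / Complex.normSq z := by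
  simp [one_div, Complex.sub_im, Complex.inv_im, neg_div]

lemma num_diff {z : ℂ} (hz : z.im ≠ 0) (h : ℕ) :
    DifferentiableAt ℂ
      (fun w : ℂ => w^h * (Complex.log (1 - 1/w) + ∑ k ∈ Icc 1 h, 1/((k:ℂ)*w^k))) z := by
  have hz0 : z ≠ 0 := fun hc => hz (by simp [hc])
  have hmem : (1 - 1/z) ∈ Complex.slitPlane := by
    right
    rw [one_sub_inv_im]
    exact div_ne_zero hz (Complex.normSq_pos.mpr hz0).ne'
  refine (differentiableAt_pow h).mul (DifferentiableAt.add ?_ ?_)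
  · have hinner : DifferentiableAt ℂ (fun w : ℂ => 1 - 1/w) z := by
      simp only [one_div]
      exact (differentiableAt_const 1).sub (differentiableAt_id.inv hz0)
    exact (Complex.differentiableAt_log hmem).comp z hinner
  · refine DifferentiableAt.fun_sum fun k hk => ?_
    simp only [one_div]
    refine DifferentiableAt.inv ((differentiableAt_const _).mul (differentiableAt_pow k)) ?_
    have hk1 : 1 ≤ k := (Finset.mem_Icc.mp hk).1
    exact mul_ne_zero (Nat.cast_ne_zero.mpr (by omega)) (pow_ne_zero _ hz0)

lemma im_ne_of_mem_ball {ω z : ℂ} (hω : ω.im ≠ 0)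
    (hz : z ∈ closedBall ω (|ω.im|/2)) : z.im ≠ 0 := by
  rw [mem_closedBall, Complex.dist_eq] at hz
  have h1 : |z.im - ω.im| ≤ |ω.im|/2 :=
    le_trans (by simpa using Complex.abs_im_le_norm (z - ω)) hz
  intro hc
  rw [hc, zero_sub, abs_neg] at h1
  have : |ω.im| > 0 := abs_pos.mpr hω
  linarith

lemma ne_conj_of_mem_ball {ω z : ℂ} (hω : ω.im ≠ 0)
    (hz : z ∈ closedBall ω (|ω.im|/2)) : z ≠ (starRingEnd ℂ) ω := by
  intro hc
  rw [mem_closedBall, Complex.dist_eq] at hz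
  have h1 : |z.im - ω.im| ≤ |ω.im|/2 :=
    le_trans (by simpa using Complex.abs_im_le_norm (z - ω)) hz
  rw [hc] at h1
  simp only [Complex.conj_im] at h1
  rw [show -ω.im - ω.im = -(2*ω.im) by ring, abs_neg] at h1
  have : |2 * ω.im| = 2 * |ω.im| := by rw [abs_mul]; norm_num
  have h2 : |ω.im| > 0 := abs_pos.mpr hω
  linarith [this ▸ h1]

lemma pow_mul_L {z : ℂ} (hz : z ≠ 0) (h : ℕ) :
    z^h * (Complex.log (1-1/z) + ∑ k ∈ Icc 1 h, 1/((k:ℂ)*z^k)) =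
      z^h * Complex.log (1-1/z) + ∑ k ∈ Icc 1 h, z^(h-k)/(k:ℂ) := by
  rw [mul_add, Finset.mul_sum]
  congr 1
  refine Finset.sum_congr rfl fun k hk => ?_
  rw [Finset.mem_Icc] at hk
  have hzk : z^h = z^(h-k) * z^k := by rw [← pow_add]; congr 1; omega
  have hk0 : (k:ℂ) ≠ 0 := Nat.cast_ne_zero.mpr (by omega)
  rw [hzk]
  field_simp

/-- For p(t) = at² + bt + c with b² - 4ac < 0, a > 0, and nonreal root ω (so p = a(t-ω)(t-ω̄)),
∫₀¹ tʰ/p(t) dt equals the sum of the residues at ω and ω̄ of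
w ↦ wʰ(log(1-1/w) + ∑_{k=1}^h 1/(k wᵏ))/p(w), and this sum is real. -/
theorem integral_quadratic_residues (a b c : ℝ) (ha : 0 < a)
    (hdisc : b ^ 2 - 4 * a * c < 0) (ω : ℂ) (hω : ω.im ≠ 0)
    (hroot : (a : ℂ) * ω ^ 2 + (b : ℂ) * ω + (c : ℂ) = 0) (h : ℕ) :
    (∫ t in (0 : ℝ)..1, (t : ℂ) ^ h / ((a : ℂ) * (t : ℂ) ^ 2 + (b : ℂ) * t + (c : ℂ))) =
      residue
        (fun w => w ^ h * (Complex.log (1 - 1 / w) +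
            ∑ k ∈ Finset.Icc 1 h, 1 / (k * w ^ k)) /
          ((a : ℂ) * w ^ 2 + (b : ℂ) * w + (c : ℂ))) ω +
      residue
        (fun w => w ^ h * (Complex.log (1 - 1 / w) +
            ∑ k ∈ Finset.Icc 1 h, 1 / (k * w ^ k)) /
          ((a : ℂ) * w ^ 2 + (b : ℂ) * w + (c : ℂ))) (starRingEnd ℂ ω) ∧
    (residue
        (fun w => w ^ h * (Complex.log (1 - 1 / w) +
            ∑ k ∈ Finset.Icc 1 h, 1 / (k * w ^ k)) /
          ((a : ℂ) * w ^ 2 + (b : ℂ) * w + (c : ℂ))) ω +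
      residue
        (fun w => w ^ h * (Complex.log (1 - 1 / w) +
            ∑ k ∈ Finset.Icc 1 h, 1 / (k * w ^ k)) /
          ((a : ℂ) * w ^ 2 + (b : ℂ) * w + (c : ℂ))) (starRingEnd ℂ ω)).im = 0 := by
  have ha' : (a : ℂ) ≠ 0 := Complex.ofReal_ne_zero.mpr ha.ne'
  have hω0 : ω ≠ 0 := fun hc => hω (by simp [hc])
  have hωconj : ω ≠ (starRingEnd ℂ) ω := by
    intro hc
    exact hω (Complex.conj_eq_iff_im.mp hc.symm)
  have hωbar : ((starRingEnd ℂ) ω).im ≠ 0 := by simpa using hω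
  have hωbar0 : (starRingEnd ℂ) ω ≠ 0 := fun hc => hωbar (by simp [hc])
  have hsubne : ω - (starRingEnd ℂ) ω ≠ 0 := sub_ne_zero.mpr hωconj
  -- conjugate root
  have hconj : (a : ℂ) * ((starRingEnd ℂ) ω) ^ 2 + (b : ℂ) * ((starRingEnd ℂ) ω) + (c : ℂ) = 0 := by
    have := congrArg (starRingEnd ℂ) hroot
    simpa [map_add, map_mul, map_pow, Complex.conj_ofReal] using this
  have h1 : (a:ℂ) * (ω + (starRingEnd ℂ) ω) + b = 0 := by
    have hsub : ((a:ℂ)*(ω + (starRingEnd ℂ) ω) + b) * (ω - (starRingEnd ℂ) ω) = 0 := by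
      linear_combination hroot - hconj
    rcases mul_eq_zero.mp hsub with h' | h'
    · exact h'
    · exact absurd h' hsubne
  have hc2 : (c:ℂ) = a * (ω * (starRingEnd ℂ) ω) := by
    linear_combination hroot - ω * h1
  have hfac : ∀ z : ℂ, (a:ℂ)*z^2 + b*z + c = a*(z-ω)*(z-(starRingEnd ℂ) ω) := by
    intro z
    linear_combination z * h1 + hc2
  -- residue at ω
  set L : ℂ → ℂ := fun w => Complex.log (1 - 1/w) + ∑ k ∈ Icc 1 h, 1/((k:ℂ)*w^k) with hL
  have hfun : (fun w : ℂ => w ^ h * (Complex.log (1 - 1 / w) +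
      ∑ k ∈ Finset.Icc 1 h, 1 / (k * w ^ k)) / ((a : ℂ) * w ^ 2 + (b : ℂ) * w + (c : ℂ)))
      = fun w => w^h * L w / ((a:ℂ)*w^2 + b*w + c) := rfl
  have hR : (0:ℝ) < |ω.im|/2 := by positivity
  have hres1 : residue (fun w => w^h * L w / ((a:ℂ)*w^2 + b*w + c)) ω
      = ω^h * L ω / ((a:ℂ)*(ω - (starRingEnd ℂ) ω)) := by
    refine residue_simple (F := fun z => z^h * L z / ((a:ℂ)*(z - (starRingEnd ℂ) ω))) hR ?_ ?_
    · intro z hz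
      refine DifferentiableAt.differentiableWithinAt ?_
      have hzim : z.im ≠ 0 := im_ne_of_mem_ball hω hz
      have hzc : z - (starRingEnd ℂ) ω ≠ 0 := sub_ne_zero.mpr (ne_conj_of_mem_ball hω hz)
      exact ((num_diff hzim h).div ((differentiableAt_const _).mul
        (differentiableAt_id.sub (differentiableAt_const _)))
        (mul_ne_zero ha' hzc))
    · intro z hz
      rw [hfac z]
      rcases eq_or_ne z ((starRingEnd ℂ) ω) with h' | h'
      · simp [h']
      · have hz1 : z - ω ≠ 0 := sub_ne_zero.mpr hz
        have hz2 : z - (starRingEnd ℂ) ω ≠ 0 := sub_ne_zero.mpr h'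
        field_simp
  have hres2 : residue (fun w => w^h * L w / ((a:ℂ)*w^2 + b*w + c)) ((starRingEnd ℂ) ω)
      = ((starRingEnd ℂ) ω)^h * L ((starRingEnd ℂ) ω) / ((a:ℂ)*((starRingEnd ℂ) ω - ω)) := by
    have hRb : (0:ℝ) < |((starRingEnd ℂ) ω).im|/2 := div_pos (abs_pos.mpr hωbar) two_pos
    refine residue_simple (F := fun z => z^h * L z / ((a:ℂ)*(z - ω))) hRb ?_ ?_
    · intro z hz
      refine DifferentiableAt.differentiableWithinAt ?_
      have hzim : z.im ≠ 0 := im_ne_of_mem_ball hωbar hz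
      have hzc : z ≠ ω := by
        have := ne_conj_of_mem_ball hωbar hz
        simpa using this
      exact ((num_diff hzim h).div ((differentiableAt_const _).mul
        (differentiableAt_id.sub (differentiableAt_const _)))
        (mul_ne_zero ha' (sub_ne_zero.mpr hzc)))
    · intro z hz
      rw [hfac z]
      rcases eq_or_ne z ω with h' | h'
      · simp [h']
      · have hz1 : z - ω ≠ 0 := sub_ne_zero.mpr h'
        have hz2 : z - (starRingEnd ℂ) ω ≠ 0 := sub_ne_zero.mpr hz
        field_simp
  -- integral computation
  have hintegral : (∫ t in (0 : ℝ)..1, (t : ℂ) ^ h / ((a : ℂ) * (t : ℂ) ^ 2 + (b : ℂ) * t + (c : ℂ)))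
      = ((a:ℂ)*(ω - (starRingEnd ℂ) ω))⁻¹ *
        ((ω^h * Complex.log (1 - 1/ω) + ∑ k ∈ Icc 1 h, ω^(h-k)/(k:ℂ)) -
         (((starRingEnd ℂ) ω)^h * Complex.log (1 - 1/((starRingEnd ℂ) ω)) +
           ∑ k ∈ Icc 1 h, ((starRingEnd ℂ) ω)^(h-k)/(k:ℂ))) := by
    have hptwise : ∀ t : ℝ, (t : ℂ) ^ h / ((a : ℂ) * (t : ℂ) ^ 2 + (b : ℂ) * t + (c : ℂ))
        = ((a:ℂ)*(ω - (starRingEnd ℂ) ω))⁻¹ *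
          ((t:ℂ)^h/((t:ℂ)-ω) - (t:ℂ)^h/((t:ℂ)-(starRingEnd ℂ) ω)) := by
      intro t
      rw [hfac]
      have hz1 := sub_ofReal_ne hω t
      have hz2 := sub_ofReal_ne hωbar t
      field_simp
      ring
    rw [intervalIntegral.integral_congr (fun t _ => hptwise t),
      intervalIntegral.integral_const_mul,
      intervalIntegral.integral_sub ((cont_pow_div hω h).intervalIntegrable 0 1)
        ((cont_pow_div hωbar h).intervalIntegrable 0 1),
      integral_pow_div_sub hω h, integral_pow_div_sub hωbar h]
  -- combine
  have hLval : ∀ z : ℂ, z ≠ 0 → z^h * L z =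
      z^h * Complex.log (1-1/z) + ∑ k ∈ Icc 1 h, z^(h-k)/(k:ℂ) := fun z hz => pow_mul_L hz h
  have hmain : (∫ t in (0 : ℝ)..1, (t : ℂ) ^ h / ((a : ℂ) * (t : ℂ) ^ 2 + (b : ℂ) * t + (c : ℂ)))
      = ω^h * L ω / ((a:ℂ)*(ω - (starRingEnd ℂ) ω)) +
        ((starRingEnd ℂ) ω)^h * L ((starRingEnd ℂ) ω) / ((a:ℂ)*((starRingEnd ℂ) ω - ω)) := by
    rw [hintegral, ← hLval ω hω0, ← hLval _ hωbar0]
    have hd : (a:ℂ)*(ω - (starRingEnd ℂ) ω) ≠ 0 := mul_ne_zero ha' hsubne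
    have hd2 : (a:ℂ)*((starRingEnd ℂ) ω - ω) ≠ 0 :=
      mul_ne_zero ha' (sub_ne_zero.mpr (Ne.symm hωconj))
    field_simp
    ring
  -- conjugation symmetry
  have hLconj : (starRingEnd ℂ) (L ω) = L ((starRingEnd ℂ) ω) := by
    rw [hL]
    simp only [map_add, map_sum]
    congr 1
    · rw [← Complex.log_conj]
      · congr 1
        simp [map_sub, map_div₀]
      · intro hc
        rw [Complex.arg_eq_pi_iff] at hc
        have h2 := one_sub_inv_im ω
        rw [hc.2] at h2
        have hns : Complex.normSq ω ≠ 0 := (Complex.normSq_pos.mpr hω0).ne'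
        have h3 := h2.symm
        rw [div_eq_zero_iff, or_iff_left hns] at h3
        exact hω h3
    · refine Finset.sum_congr rfl fun k hk => ?_
      simp [map_div₀]
  have hconjsum : (starRingEnd ℂ) (ω^h * L ω / ((a:ℂ)*(ω - (starRingEnd ℂ) ω)))
      = ((starRingEnd ℂ) ω)^h * L ((starRingEnd ℂ) ω) / ((a:ℂ)*((starRingEnd ℂ) ω - ω)) := by
    simp only [map_div₀, map_mul, map_pow, map_sub, Complex.conj_ofReal, Complex.conj_conj, hLconj]
  rw [hfun]
  refine ⟨by rw [hres1, hres2]; exact hmain, ?_⟩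
  rw [hres1, hres2]
  rw [← Complex.conj_eq_iff_im]
  rw [map_add, hconjsum]
  rw [← hconjsum, Complex.conj_conj]
  ring
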